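/- Taylor remainder bound for the Gaussian kernel: for any real y and positive integer L, |exp(−y²/2) − Σ_{l=0}^{L−1} (−1)^l y^{2l} / (2^l l!)| ≤ (y² e / (2L))^L. Consequently, if y² ≤ M² and L = (1 + M² e / 2) log(1/γ) with 0 < γ ≤ e^{-e}, then the remainder is at most γ. -/

import Mathlib

open Real

lemma gauss_rem_aux (L : ℕ) : ∀ u : ℝ, 0 ≤ u →
    0 ≤ (-1 : ℝ) ^ L * (Real.exp (-u) - ∑ l ∈ Finset.range L, (-1 : ℝ) ^ l * u ^ l / Nat.factorial l) ∧
    (-1 : ℝ) ^ L * (Real.exp (-u) - ∑ l ∈ Finset.range L, (-1 : ℝ) ^ l * u ^ l / Nat.factorial l)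
      ≤ u ^ L / Nat.factorial L := by
  induction L with
  | zero =>
    intro u hu
    simp only [pow_zero, one_mul, Finset.range_zero, Finset.sum_empty, sub_zero,
      Nat.factorial_zero, Nat.cast_one, div_one]
    exact ⟨(Real.exp_pos _).le, by
      calc Real.exp (-u) ≤ Real.exp 0 := Real.exp_le_exp.2 (by linarith)
        _ = 1 := Real.exp_zero⟩
  | succ L IH =>
    -- key: (-1)^(L+1) * (exp(-u) - S_{L+1} u) = u^L/L! - (-1)^L * (exp(-u) - S_L u)
    have hsq : ∀ n : ℕ, ((-1 : ℝ) ^ n) * ((-1 : ℝ) ^ n) = 1 := by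
      intro n; rw [← pow_add, ← two_mul, pow_mul]; norm_num
    have hkey : ∀ u : ℝ,
        (-1 : ℝ) ^ (L + 1) * (Real.exp (-u) - ∑ l ∈ Finset.range (L + 1), (-1 : ℝ) ^ l * u ^ l / Nat.factorial l)
        = u ^ L / Nat.factorial L
          - (-1 : ℝ) ^ L * (Real.exp (-u) - ∑ l ∈ Finset.range L, (-1 : ℝ) ^ l * u ^ l / Nat.factorial l) := by
      intro u
      rw [Finset.sum_range_succ, pow_succ]
      linear_combination (u ^ L / (Nat.factorial L : ℝ)) * hsq L
    intro u hu
    constructor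
    · rw [hkey u]
      have := (IH u hu).2
      linarith
    · -- upper bound via monotonicity
      set g : ℝ → ℝ := fun u => u ^ (L + 1) / Nat.factorial (L + 1)
        - (-1 : ℝ) ^ (L + 1) * (Real.exp (-u) - ∑ l ∈ Finset.range (L + 1), (-1 : ℝ) ^ l * u ^ l / Nat.factorial l)
        with hgdef
      have hderiv : ∀ x : ℝ, HasDerivAt g
          (x ^ L / Nat.factorial L
            - (-1 : ℝ) ^ L * (Real.exp (-x) - ∑ l ∈ Finset.range L, (-1 : ℝ) ^ l * x ^ l / Nat.factorial l)) x := by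
        intro x
        have hexp : HasDerivAt (fun x : ℝ => Real.exp (-x)) (-Real.exp (-x)) x := by
          exact (hasDerivAt_neg x).exp.congr_deriv (by ring)
        have hsum : HasDerivAt
            (fun x : ℝ => ∑ l ∈ Finset.range (L + 1), (-1 : ℝ) ^ l * x ^ l / Nat.factorial l)
            (∑ l ∈ Finset.range (L + 1), (-1 : ℝ) ^ l * (l * x ^ (l - 1)) / Nat.factorial l) x := by
          apply HasDerivAt.fun_sum
          intro l _
          exact ((hasDerivAt_pow l x).const_mul ((-1 : ℝ) ^ l)).div_const _
        have hsumval : (∑ l ∈ Finset.range (L + 1), (-1 : ℝ) ^ l * (l * x ^ (l - 1)) / Nat.factorial l)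
            = -∑ l ∈ Finset.range L, (-1 : ℝ) ^ l * x ^ l / Nat.factorial l := by
          rw [Finset.sum_range_succ']
          simp only [Nat.cast_zero, zero_mul, mul_zero, zero_div, add_zero, pow_zero, one_mul]
          rw [← Finset.sum_neg_distrib]
          apply Finset.sum_congr rfl
          intro k _
          have h1 : ((Nat.factorial k : ℝ)) ≠ 0 := Nat.cast_ne_zero.2 k.factorial_ne_zero
          have h2 : ((k : ℝ) + 1) ≠ 0 := by positivity
          rw [Nat.factorial_succ, pow_succ]
          push_cast
          field_simp
        have hpow : HasDerivAt (fun x : ℝ => x ^ (L + 1) / Nat.factorial (L + 1))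
            (x ^ L / Nat.factorial L) x := by
          have := (hasDerivAt_pow (L + 1) x).div_const ((Nat.factorial (L + 1) : ℝ))
          refine this.congr_deriv ?_
          symm
          rw [Nat.factorial_succ, Nat.add_sub_cancel]
          have h1 : ((Nat.factorial L : ℝ)) ≠ 0 := Nat.cast_ne_zero.2 L.factorial_ne_zero
          have h2 : ((L : ℝ) + 1) ≠ 0 := by positivity
          push_cast
          field_simp
        have := hpow.sub (((hexp.sub (hsum)).const_mul ((-1 : ℝ) ^ (L + 1))))
        refine this.congr_deriv ?_
        symm
        rw [hsumval, pow_succ]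
        ring
      have hg0 : g 0 = 0 := by
        simp only [hgdef]
        rw [Finset.sum_range_succ']
        simp [Real.exp_zero, zero_pow, Nat.factorial_ne_zero]
      have hmono : MonotoneOn g (Set.Ici (0 : ℝ)) := by
        apply monotoneOn_of_deriv_nonneg (convex_Ici 0)
        · exact (Differentiable.continuous (fun x => (hderiv x).differentiableAt)).continuousOn
        · exact Differentiable.differentiableOn (fun x => (hderiv x).differentiableAt)
        · intro x hx
          rw [interior_Ici] at hx
          rw [(hderiv x).deriv]
          have := (IH x (le_of_lt hx)).2
          linarith
      have : (0 : ℝ) ≤ g u := by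
        rw [← hg0]
        exact hmono (by simp) hu hu
      simp only [hgdef] at this
      linarith

/-- Taylor remainder bound for the Gaussian kernel: for any real `y` and positive
integer `L`, `|exp(−y²/2) − Σ_{l<L} (−1)^l y^{2l} / (2^l l!)| ≤ (y² e / (2L))^L`.
Consequently, if `y² ≤ M²` and `L = (1 + M² e / 2) log(1/γ)` with `0 < γ ≤ e^{-e}`,
the remainder is at most `γ`. -/
theorem stmt10 (y : ℝ) (L : ℕ) (hL : 1 ≤ L) :
    |Real.exp (-y ^ 2 / 2) -
        ∑ l ∈ Finset.range L, (-1 : ℝ) ^ l * y ^ (2 * l) / (2 ^ l * Nat.factorial l)| ≤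
      (y ^ 2 * Real.exp 1 / (2 * L)) ^ L ∧
    (∀ M γ : ℝ, y ^ 2 ≤ M ^ 2 → 0 < γ → γ ≤ Real.exp (-Real.exp 1) →
      (L : ℝ) = (1 + M ^ 2 * Real.exp 1 / 2) * Real.log (1 / γ) →
      |Real.exp (-y ^ 2 / 2) -
          ∑ l ∈ Finset.range L, (-1 : ℝ) ^ l * y ^ (2 * l) / (2 ^ l * Nat.factorial l)| ≤ γ) := by
  have hLpos : (0 : ℝ) < L := by exact_mod_cast hL
  obtain ⟨u, hudef⟩ : ∃ u : ℝ, u = y ^ 2 / 2 := ⟨_, rfl⟩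
  have hu : 0 ≤ u := by rw [hudef]; positivity
  have hsum : (∑ l ∈ Finset.range L, (-1 : ℝ) ^ l * y ^ (2 * l) / (2 ^ l * Nat.factorial l))
      = ∑ l ∈ Finset.range L, (-1 : ℝ) ^ l * u ^ l / Nat.factorial l := by
    apply Finset.sum_congr rfl
    intro l _
    rw [hudef, div_pow, pow_mul]
    ring
  have hexpeq : Real.exp (-y ^ 2 / 2) = Real.exp (-u) := by rw [hudef]; ring_nf
  have haux := gauss_rem_aux L u hu
  have habs : |Real.exp (-y ^ 2 / 2) -
      ∑ l ∈ Finset.range L, (-1 : ℝ) ^ l * y ^ (2 * l) / (2 ^ l * Nat.factorial l)|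
      ≤ u ^ L / Nat.factorial L := by
    rw [hexpeq, hsum]
    have h1 : |Real.exp (-u) - ∑ l ∈ Finset.range L, (-1 : ℝ) ^ l * u ^ l / Nat.factorial l|
        = |(-1 : ℝ) ^ L * (Real.exp (-u) - ∑ l ∈ Finset.range L, (-1 : ℝ) ^ l * u ^ l / Nat.factorial l)| := by
      rw [abs_mul, abs_pow, abs_neg, abs_one, one_pow, one_mul]
    rw [h1, abs_of_nonneg haux.1]
    exact haux.2
  have hfacpos : (0 : ℝ) < Nat.factorial L := by
    exact_mod_cast L.factorial_pos
  have hfacbound : ((L : ℝ)) ^ L ≤ Real.exp 1 ^ L * Nat.factorial L := by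
    have h := Real.pow_div_factorial_le_exp (x := (L : ℝ)) (le_of_lt hLpos) L
    rw [div_le_iff₀ hfacpos] at h
    rw [← Real.exp_one_pow] at h
    exact h
  have hmain : u ^ L / Nat.factorial L ≤ (y ^ 2 * Real.exp 1 / (2 * L)) ^ L := by
    have hbase : y ^ 2 * Real.exp 1 / (2 * L) = u * Real.exp 1 / L := by
      rw [hudef]; field_simp
    have hsplit : (u * Real.exp 1 / (L : ℝ)) ^ L = u ^ L * Real.exp 1 ^ L / ((L : ℝ)) ^ L := by
      rw [div_pow, mul_pow]
    rw [hbase, hsplit, div_le_div_iff₀ hfacpos (pow_pos hLpos L)]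
    nlinarith [mul_le_mul_of_nonneg_left hfacbound (pow_nonneg hu L)]
  refine ⟨le_trans habs hmain, ?_⟩
  intro M γ hyM hγ hγe hLeq
  rcases eq_or_lt_of_le hu with h0 | hupos
  · refine le_trans (le_trans habs hmain) ?_
    rw [show y ^ 2 = 0 by rw [hudef] at h0; linarith]
    rw [zero_mul, zero_div, zero_pow (by omega)]
    exact le_of_lt hγ
  · have hy2 : 0 < y ^ 2 := by rw [hudef] at hupos; linarith
    have hM2 : 0 < M ^ 2 := lt_of_lt_of_le hy2 hyM
    have he : (0 : ℝ) < Real.exp 1 := Real.exp_pos 1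
    obtain ⟨t, htdef⟩ : ∃ t : ℝ, t = Real.log (1 / γ) := ⟨_, rfl⟩
    rw [← htdef] at hLeq
    have ht : Real.exp 1 ≤ t := by
      rw [htdef, one_div, Real.log_inv, le_neg]
      rw [← Real.log_exp (-Real.exp 1)]
      exact Real.log_le_log hγ hγe
    have htpos : 0 < t := lt_of_lt_of_le he ht
    have hlogt : 1 ≤ Real.log t := by
      rw [Real.le_log_iff_exp_le htpos]
      exact ht
    have hLt : t ≤ (L : ℝ) := by
      rw [hLeq]
      nlinarith [mul_nonneg (mul_nonneg hM2.le he.le) htpos.le]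
    have hb1 : y ^ 2 * Real.exp 1 / (2 * L) ≤ M ^ 2 * Real.exp 1 / (2 * L) := by
      apply div_le_div_of_nonneg_right _ (by positivity)
      · nlinarith
    have hb2 : M ^ 2 * Real.exp 1 / (2 * L) ≤ 1 / t := by
      rw [div_le_div_iff₀ (by positivity) htpos, hLeq]
      nlinarith [mul_nonneg (mul_nonneg hM2.le he.le) htpos.le]
    have hbn : 0 ≤ y ^ 2 * Real.exp 1 / (2 * L) := by positivity
    have hp1 : (y ^ 2 * Real.exp 1 / (2 * L)) ^ L ≤ (1 / t) ^ L :=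
      pow_le_pow_left₀ hbn (le_trans hb1 hb2) L
    have hp2 : (1 / t) ^ L ≤ γ := by
      have h1t : (0 : ℝ) < 1 / t := by positivity
      have e1 : (1 / t) ^ L = Real.exp ((L : ℝ) * (-Real.log t)) := by
        rw [Real.exp_nat_mul, ← Real.log_inv, ← one_div, Real.exp_log h1t]
      have e2 : γ = Real.exp (-t) := by
        rw [htdef, one_div, Real.log_inv, neg_neg, Real.exp_log hγ]
      have hprod : 0 ≤ (L : ℝ) * (Real.log t - 1) :=
        mul_nonneg (htpos.le.trans hLt) (sub_nonneg.2 hlogt)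
      have hineq : (L : ℝ) * (-Real.log t) ≤ -t := by
        clear haux habs hmain hsum hexpeq hp1 e1 e2 hγe hb1 hb2 hfacbound
        linarith [hprod, hLt]
      rw [e1, e2]
      exact Real.exp_le_exp.2 hineq
    exact le_trans habs (le_trans hmain (le_trans hp1 hp2))
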